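/- Let M' ∈ Sym_2(ℤ_2) be nonsingular such that every entry of (M')⁻¹ − [[1/6, −1/12],[−1/12, 1/6]] lies in ℤ_2 (the inverse taken over ℚ_2; note [[1/6,−1/12],[−1/12,1/6]] is the inverse of [[8,4],[4,8]]). Then M' is congruent under GL_2(ℤ_2) to [[8, 4],[4, 8]]. -/

import Mathlib

open Matrix MeasureTheory

/-- Congruence of square matrices over `R`: `B = U * A * Uᵀ` for some `U ∈ GL`. -/
def Matrix.Congruent {R : Type*} [CommRing R] {ι : Type*} [Fintype ι] [DecidableEq ι]
    (A B : Matrix ι ι R) : Prop :=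
  ∃ U : (Matrix ι ι R)ˣ, (U : Matrix ι ι R) * A * (U : Matrix ι ι R)ᵀ = B

/-- Congruence of square matrices indexed by two (necessarily equipotent) index types. -/
def Matrix.CongruentTo {R : Type*} [CommRing R] {ι κ : Type*} [Fintype ι] [DecidableEq ι]
    [Fintype κ] [DecidableEq κ] (A : Matrix ι ι R) (B : Matrix κ κ R) : Prop :=
  ∃ e : ι ≃ κ, (A.submatrix e.symm e.symm).Congruent B


set_option maxHeartbeats 4000000 in
/-- Let `M' ∈ Sym_2(ℤ_2)` be nonsingular with every entry of
`(M')⁻¹ - [[1/6,-1/12],[-1/12,1/6]]` in `ℤ_2` (inverse over `ℚ_2`). Then `M'` is congruent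
under `GL_2(ℤ_2)` to `[[8,4],[4,8]]`. -/
theorem stmt_8 (M' : Matrix (Fin 2) (Fin 2) ℤ_[2]) (hs : M'.IsSymm) (hd : M'.det ≠ 0)
    (h : ∀ i j, ‖((M'.map (fun a => (a : ℚ_[2])))⁻¹ -
      (!![1 / 6, -(1 / 12); -(1 / 12), 1 / 6] : Matrix (Fin 2) (Fin 2) ℚ_[2])) i j‖ ≤ 1) :
    M'.Congruent !![8, 4; 4, 8] := by
  classical
  set π : ℤ_[2] →+* ℚ_[2] := PadicInt.Coe.ringHom with hπ
  have hπa : ∀ z : ℤ_[2], π z = (z : ℚ_[2]) := fun z => rfl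
  set Mq : Matrix (Fin 2) (Fin 2) ℚ_[2] := M'.map (fun a => (a : ℚ_[2])) with hMq
  have hMqπ : Mq = M'.map π := rfl
  set Qm : Matrix (Fin 2) (Fin 2) ℚ_[2] := !![1/6, -(1/12); -(1/12), 1/6] with hQm
  set Nz : Matrix (Fin 2) (Fin 2) ℤ_[2] := !![8,4;4,8] with hNz
  set Nq : Matrix (Fin 2) (Fin 2) ℚ_[2] := !![8,4;4,8] with hNq
  have hNzq : Nz.map π = Nq := by
    ext i j
    fin_cases i <;> fin_cases j <;> simp [hNz, hNq, Matrix.map_apply, map_ofNat]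
  have hdetq : Mq.det ≠ 0 := by
    rw [hMqπ, show M'.map ⇑π = π.mapMatrix M' from rfl, ← RingHom.map_det]
    simpa [hπa] using PadicInt.coe_ne_zero.mpr hd
  have hMqinv : Mq * Mq⁻¹ = 1 := Matrix.mul_nonsing_inv _ (isUnit_iff_ne_zero.mpr hdetq)
  set A : Matrix (Fin 2) (Fin 2) ℤ_[2] := Matrix.of (fun i j => (⟨(Mq⁻¹ - Qm) i j, h i j⟩ : ℤ_[2])) with hA
  have hAmap : A.map π = Mq⁻¹ - Qm := by
    ext i j; simp [hA, Matrix.map_apply, hπa]; rfl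
  have h1 : Qm * Nq = 1 := by
    rw [hQm, hNq, Matrix.mul_fin_two, Matrix.one_fin_two]
    norm_num
  have h2 : Mq * (Qm + A.map π) = 1 := by
    rw [hAmap]; simp [hMqinv]
  have key : M' * (1 + A * Nz) = Nz := by
    have key' : (M' * (1 + A * Nz)).map π = Nz.map π := by
      rw [Matrix.map_mul, Matrix.map_add _ (fun a b => map_add π a b), Matrix.map_one _ (map_zero π) (map_one π), Matrix.map_mul, hNzq, ← hMqπ]
      have h3 : (1 : Matrix (Fin 2) (Fin 2) ℚ_[2]) + A.map ⇑π * Nq = (Qm + A.map ⇑π) * Nq := by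
        rw [add_mul, h1]
      rw [h3, ← mul_assoc, h2, one_mul]
    ext i j
    have := congrArg (fun M : Matrix (Fin 2) (Fin 2) ℚ_[2] => M i j) key'
    exact Subtype.coe_injective this
  set a := A 0 0 with ha; set b := A 0 1 with hb; set b' := A 1 0 with hb'; set c := A 1 1 with hc
  set m0 := M' 0 0 with hm0; set m1 := M' 0 1 with hm1; set m1' := M' 1 0 with hm1'; set m2 := M' 1 1 with hm2
  have E00 := congrArg (fun M : Matrix (Fin 2) (Fin 2) ℤ_[2] => M 0 0) key
  have E01 := congrArg (fun M : Matrix (Fin 2) (Fin 2) ℤ_[2] => M 0 1) key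
  have E10 := congrArg (fun M : Matrix (Fin 2) (Fin 2) ℤ_[2] => M 1 0) key
  have E11 := congrArg (fun M : Matrix (Fin 2) (Fin 2) ℤ_[2] => M 1 1) key
  simp only [Matrix.mul_apply, Matrix.add_apply, Matrix.one_apply, Fin.sum_univ_two, hNz] at E00 E01 E10 E11
  norm_num [Matrix.cons_val_zero, Matrix.cons_val_one] at E00 E01 E10 E11
  -- abbreviations
  have hsym : M' 1 0 = M' 0 1 := hs.apply 0 1
  -- Cramer-style consequences
  set D : ℤ_[2] := (1 + 8*A 0 0 + 4*A 0 1)*(1 + 4*A 1 0 + 8*A 1 1) - (4*A 0 0 + 8*A 0 1)*(8*A 1 0 + 4*A 1 1) with hD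
  have hdm0 : D * M' 0 0 = 8 + 48 * A 1 1 := by
    linear_combination (1 + 4*A 1 0 + 8*A 1 1) * E00 - (8*A 1 0 + 4*A 1 1) * E01
  have hdm1 : D * M' 0 1 = 4 - 48 * A 0 1 := by
    linear_combination (1 + 8*A 0 0 + 4*A 0 1) * E01 - (4*A 0 0 + 8*A 0 1) * E00
  have hdm1' : D * M' 1 0 = 4 - 48 * A 1 0 := by
    linear_combination (1 + 4*A 1 0 + 8*A 1 1) * E10 - (8*A 1 0 + 4*A 1 1) * E11
  have hdm2 : D * M' 1 1 = 8 + 48 * A 0 0 := by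
    linear_combination (1 + 8*A 0 0 + 4*A 0 1) * E11 - (4*A 0 0 + 8*A 0 1) * E10
  have h48 : (48 : ℤ_[2]) ≠ 0 := by
    intro hcon
    have : (48:ℚ_[2]) = 0 := by simpa [map_ofNat] using congrArg π hcon
    norm_num at this
  have hbb' : A 1 0 = A 0 1 := by
    apply mul_left_cancel₀ h48
    linear_combination hdm1' - hdm1 - D * hsym
  -- the unit d
  set k : ℤ_[2] := A 0 0 + A 0 1 + A 1 1 + 6*(A 0 0)*(A 1 1) - 6*(A 0 1)*(A 0 1) with hk
  set d : ℤ_[2] := 1 + 8*k with hdd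
  have hdD : d = D := by rw [hdd, hD, hk]; linear_combination (48*A 0 1 - 4) * hbb'
  have two_prime : Prime (2 : ℤ_[2]) := by
    have := PadicInt.prime_p (p := 2); exact_mod_cast this
  have odd_unit : ∀ z w : ℤ_[2], z = 2*w + 1 → IsUnit z := by
    intro z w hz
    rw [PadicInt.isUnit_iff]
    refine le_antisymm (PadicInt.norm_le_one z) ?_
    by_contra hlt
    push_neg at hlt
    have h2dvd : (2:ℤ_[2]) ∣ z := by
      have := (PadicInt.norm_lt_one_iff_dvd z).mp (lt_of_le_of_ne (PadicInt.norm_le_one z) (by simpa using ne_of_lt hlt))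
      exact_mod_cast this
    obtain ⟨y, hy⟩ := h2dvd
    have : (2:ℤ_[2]) ∣ 1 := ⟨y - w, by rw [mul_sub, ← hy, hz]; ring⟩
    exact two_prime.not_unit (isUnit_of_dvd_one this)
  have hdu : IsUnit d := odd_unit d (4*k) (by rw [hdd]; ring)
  obtain ⟨du, hdu'⟩ := hdu
  set d' : ℤ_[2] := ((du⁻¹ : ℤ_[2]ˣ) : ℤ_[2]) with hd'def
  have hdd' : d * d' = 1 := by rw [← hdu', hd'def]; exact_mod_cast du.mul_inv
  clear_value k d d'
  have hdm0d : d * M' 0 0 = 8 + 48 * A 1 1 := by rw [hdD]; exact hdm0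
  have hdm1d : d * M' 0 1 = 4 - 48 * A 0 1 := by rw [hdD]; exact hdm1
  have hdm1'd : d * M' 1 0 = 4 - 48 * A 1 0 := by rw [hdD]; exact hdm1'
  have hdm2d : d * M' 1 1 = 8 + 48 * A 0 0 := by rw [hdD]; exact hdm2
  -- determinant consequence
  have hdet : M'.det * d = 48 := by
    have h0 := congrArg Matrix.det key
    rw [Matrix.det_mul] at h0
    have h1 : Nz.det = 48 := by rw [hNz, Matrix.det_fin_two_of]; norm_num
    have h2 : (1 + A * Nz).det = D := by
      rw [Matrix.det_fin_two]
      simp only [Matrix.add_apply, Matrix.mul_apply, Matrix.one_apply, Fin.sum_univ_two, hNz]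
      norm_num [Matrix.cons_val_zero, Matrix.cons_val_one]
      rw [hD]; ring
    rw [h1, h2] at h0
    rw [hdD]; exact h0
  have hdetfin : M'.det = M' 0 0 * M' 1 1 - M' 0 1 * M' 1 0 := Matrix.det_fin_two M'
  have e1 : (8 + 48*A 1 1)*(8 + 48*A 0 0) - (4 - 48*A 0 1)*(4 - 48*A 1 0)
      = d*d*(M' 0 0 * M' 1 1 - M' 0 1 * M' 1 0) := by
    linear_combination (-(8 + 48*A 0 0))*hdm0d - (d*M' 0 0)*hdm2d + (d*M' 1 0)*hdm1d + (4 - 48*A 0 1)*hdm1'd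
  have e2 : (8 + 48*A 1 1)*(8 + 48*A 0 0) - (4 - 48*A 0 1)*(4 - 48*A 0 1) = 48 * d := by
    linear_combination e1 - (48*(4 - 48*A 0 1))*hbb' - d*d*hdetfin + d*hdet
  have h16ne : (16 : ℤ_[2]) ≠ 0 := by
    intro hcon
    have : (16:ℚ_[2]) = 0 := by simpa [map_ofNat] using congrArg π hcon
    norm_num at this
  have hK3 : 4*(d'*(1+6*A 1 1))*(d'*(1+6*A 0 0)) - (d'*(1-12*A 0 1))*(d'*(1-12*A 0 1)) = 3*d' := by
    apply mul_left_cancel₀ h16ne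
    linear_combination d'*d'*e2 + 48*d'*hdd'
  -- entries of M'
  have hm0eq : M' 0 0 = 8*(d'*(1+6*A 1 1)) := by linear_combination d'*hdm0d - M' 0 0 * hdd'
  have hm1eq : M' 0 1 = 4*(d'*(1-12*A 0 1)) := by linear_combination d'*hdm1d - M' 0 1 * hdd'
  have hm1'eq : M' 1 0 = 4*(d'*(1-12*A 0 1)) := by rw [hsym]; exact hm1eq
  have hm2eq : M' 1 1 = 8*(d'*(1+6*A 0 0)) := by linear_combination d'*hdm2d - M' 1 1 * hdd'
  set a₀ : ℤ_[2] := d'*(1+6*A 1 1) with ha₀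
  set u : ℤ_[2] := d'*(1-12*A 0 1) with hu
  set c₀ : ℤ_[2] := d'*(1+6*A 0 0) with hc₀
  clear_value a₀ u c₀
  have hd'unit : IsUnit d' := IsUnit.of_mul_eq_one (a := d') d (by linear_combination hdd')
  have huunit : IsUnit u := by
    rw [hu]
    exact hd'unit.mul (odd_unit _ (-6*A 0 1) (by ring))
  have hn2 : ‖(2:ℤ_[2])‖ = 1/2 := by
    have := PadicInt.norm_p (p := 2)
    rw [show ((2:ℕ):ℤ_[2]) = (2:ℤ_[2]) by norm_num] at this
    rw [this]; norm_num
  -- Hensel 1 : represent 1 by a₀ X² + u X + c₀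
  have hc01 : c₀ - 1 = 2*(d'*(3*A 0 0 - 4*k)) := by rw [hc₀]; linear_combination hdd' - d'*hdd
  obtain ⟨x₀, hx₀⟩ : ∃ x₀ : ℤ_[2], a₀*x₀^2 + u*x₀ + c₀ = 1 := by
    set F : Polynomial ℤ_[2] := Polynomial.C a₀ * Polynomial.X^2 + Polynomial.C u * Polynomial.X
      + Polynomial.C (c₀ - 1) with hF
    have hev : F.eval 0 = c₀ - 1 := by simp [hF]
    have hdev : F.derivative.eval 0 = u := by simp [hF]
    have hnorm : ‖F.eval 0‖ < ‖F.derivative.eval 0‖^2 := by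
      rw [hev, hdev, PadicInt.isUnit_iff.mp huunit, hc01, one_pow]
      calc ‖(2:ℤ_[2])*(d'*(3*A 0 0 - 4*k))‖ = ‖(2:ℤ_[2])‖ * ‖d'*(3*A 0 0 - 4*k)‖ := by
            rw [norm_mul]
        _ ≤ (1/2) * 1 := by
            rw [hn2]
            exact mul_le_mul_of_nonneg_left (PadicInt.norm_le_one _) (by norm_num)
        _ < 1 := by norm_num
    obtain ⟨z, hz, -⟩ := hensels_lemma hnorm
    refine ⟨z, ?_⟩
    have : a₀*z^2 + u*z + (c₀ - 1) = 0 := by simpa [hF] using hz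
    linear_combination this
  -- Hensel 2 : square root of d'
  have h1d' : (1:ℤ_[2]) - d' = 2*(2*(2*(k*d'))) := by linear_combination d'*hdd - hdd'
  obtain ⟨w, hw2⟩ : ∃ w : ℤ_[2], w^2 = d' := by
    set F : Polynomial ℤ_[2] := Polynomial.X^2 - Polynomial.C d' with hF
    have hev : F.eval 1 = 1 - d' := by simp [hF]
    have hdev : F.derivative.eval 1 = 2 := by simp [hF]; norm_num
    have hnorm : ‖F.eval 1‖ < ‖F.derivative.eval 1‖^2 := by
      rw [hev, hdev, h1d', hn2]
      calc ‖(2:ℤ_[2])*(2*(2*(k*d')))‖ = ‖(2:ℤ_[2])‖*(‖(2:ℤ_[2])‖*(‖(2:ℤ_[2])‖*‖k*d'‖)) := by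
            rw [norm_mul, norm_mul, norm_mul]
        _ ≤ (1/2)*((1/2)*((1/2)*1)) := by
            rw [hn2]
            exact mul_le_mul_of_nonneg_left (mul_le_mul_of_nonneg_left
              (mul_le_mul_of_nonneg_left (PadicInt.norm_le_one _) (by norm_num))
              (by norm_num)) (by norm_num)
        _ < (1/2)^2 := by norm_num
    obtain ⟨z, hz, -⟩ := hensels_lemma hnorm
    refine ⟨z, ?_⟩
    have : z^2 - d' = 0 := by simpa [hF] using hz
    linear_combination this
  -- w is odd
  obtain ⟨x, hx⟩ : ∃ x : ℤ_[2], 1 + w = 2*x := by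
    have hdvd : (2:ℤ_[2]) ∣ (1+w)*(w-1) := ⟨-(4*(k*d')), by linear_combination hw2 - h1d'⟩
    rcases (two_prime.dvd_mul).mp hdvd with h2 | h2
    · exact h2
    · obtain ⟨y, hy⟩ := h2
      exact ⟨y + 1, by linear_combination hy⟩
  -- auxiliary scalars
  set t : ℤ_[2] := d'*(4*k+6*A 0 1) - a₀*x₀ with ht
  have hT : 2*t = 1 - 2*a₀*x₀ - u := by rw [ht, hu]; linear_combination hdd' - d'*hdd
  set s : ℤ_[2] := a₀*(1+t*x₀)^2 + u*(t*(1+t*x₀)) + c₀*t^2 with hsdef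
  -- the matrices
  clear_value t s
  set P₁ : Matrix (Fin 2) (Fin 2) ℤ_[2] := !![x₀, 1; 1+t*x₀, t] with hP₁
  set P₁i : Matrix (Fin 2) (Fin 2) ℤ_[2] := !![-t, 1; 1+t*x₀, -x₀] with hP₁i
  set P₂ : Matrix (Fin 2) (Fin 2) ℤ_[2] := !![1, 0; x, -w] with hP₂
  set Q₂ : Matrix (Fin 2) (Fin 2) ℤ_[2] := !![1, 0; d*(w*x), -(d*w)] with hQ₂
  clear_value P₁ P₁i P₂ Q₂
  have hP₁P₁i : P₁ * P₁i = 1 := by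
    ext i j
    fin_cases i <;> fin_cases j <;>
      simp [hP₁, hP₁i, Matrix.mul_apply, Fin.sum_univ_two, Matrix.one_apply] <;> ring
  have hP₁iP₁ : P₁i * P₁ = 1 := by
    ext i j
    fin_cases i <;> fin_cases j <;>
      simp [hP₁, hP₁i, Matrix.mul_apply, Fin.sum_univ_two, Matrix.one_apply] <;> ring
  have hQ₂P₂ : Q₂ * P₂ = 1 := by
    ext i j
    fin_cases i <;> fin_cases j <;>
      simp [hP₂, hQ₂, Matrix.mul_apply, Fin.sum_univ_two, Matrix.one_apply] <;>
      first
        | ring1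
        | linear_combination d*hw2 + hdd'
        | linear_combination -(d*hw2) - hdd'
  have hP₂Q₂ : P₂ * Q₂ = 1 := by
    ext i j
    fin_cases i <;> fin_cases j <;>
      simp [hP₂, hQ₂, Matrix.mul_apply, Fin.sum_univ_two, Matrix.one_apply] <;>
      first
        | ring1
        | linear_combination d*hw2 + hdd'
        | linear_combination -(d*hw2) - hdd'
        | linear_combination (-x)*d*hw2 - x*hdd'
        | linear_combination x*d*hw2 + x*hdd'
  have hW : P₁ * M' * P₁ᵀ = !![8, 4; 4, 8*s] := by
    ext i j
    fin_cases i <;> fin_cases j <;>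
      simp only [Matrix.mul_apply, Matrix.transpose_apply, Fin.sum_univ_two] <;>
      norm_num [hP₁, Matrix.cons_val_zero, Matrix.cons_val_one] <;>
      first
        | ring1
        | linear_combination 8*hx₀ + x₀^2*hm0eq + x₀*hm1eq + x₀*hm1'eq + hm2eq
        | linear_combination 8*t*hx₀ + 4*hT + x₀*(1+t*x₀)*hm0eq + x₀*t*hm1eq
            + (1+t*x₀)*hm1'eq + t*hm2eq
        | linear_combination 8*t*hx₀ + 4*hT + x₀*(1+t*x₀)*hm0eq + (1+t*x₀)*hm1eq
            + x₀*t*hm1'eq + t*hm2eq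
        | linear_combination (-8)*hsdef + (1+t*x₀)^2*hm0eq + t*(1+t*x₀)*hm1eq
            + t*(1+t*x₀)*hm1'eq + t^2*hm2eq
  have hL : 4*s - 1 = 4*a₀*c₀ - u*u := by
    have h1 := congrArg Matrix.det hW
    rw [Matrix.det_mul, Matrix.det_mul, Matrix.det_transpose] at h1
    have hdP : P₁.det = -1 := by rw [hP₁, Matrix.det_fin_two_of]; ring
    have hdW : (!![8,4;4,8*s] : Matrix (Fin 2) (Fin 2) ℤ_[2]).det = 64*s - 16 := by
      rw [Matrix.det_fin_two_of]; ring
    rw [hdP, hdW] at h1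
    apply mul_left_cancel₀ h16ne
    linear_combination -h1 + hdetfin + M' 1 1*hm0eq + 8*a₀*hm2eq - M' 1 0*hm1eq - 4*u*hm1'eq
  have h2ne : (2:ℤ_[2]) ≠ 0 := two_prime.ne_zero
  have hQf : 8*x^2 - 8*(x*w) + 8*w^2 = 8*s := by
    apply mul_left_cancel₀ h2ne
    linear_combination (-4*(2*x+1-w))*hx + 12*hw2 - 4*hK3 - 4*hL
  have hP₂N : P₂ * Nz * P₂ᵀ = !![8, 4; 4, 8*s] := by
    ext i j
    fin_cases i <;> fin_cases j <;>
      simp only [Matrix.mul_apply, Matrix.transpose_apply, Fin.sum_univ_two] <;>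
      norm_num [hP₂, hNz, Matrix.cons_val_zero, Matrix.cons_val_one] <;>
      first
        | ring1
        | linear_combination (-4)*hx
        | linear_combination hQf
  refine ⟨⟨Q₂*P₁, P₁i*P₂, ?_, ?_⟩, ?_⟩
  · rw [Matrix.mul_assoc, ← Matrix.mul_assoc P₁, hP₁P₁i, Matrix.one_mul, hQ₂P₂]
  · rw [Matrix.mul_assoc, ← Matrix.mul_assoc P₂, hP₂Q₂, Matrix.one_mul, hP₁iP₁]
  · show (Q₂*P₁) * M' * (Q₂*P₁)ᵀ = Nz
    rw [Matrix.transpose_mul]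
    calc (Q₂*P₁)*M'*(P₁ᵀ*Q₂ᵀ) = Q₂*(P₁*M'*P₁ᵀ)*Q₂ᵀ := by simp only [Matrix.mul_assoc]
      _ = Q₂*(P₂*Nz*P₂ᵀ)*Q₂ᵀ := by rw [hW, hP₂N]
      _ = (Q₂*P₂)*(Nz*(P₂ᵀ*Q₂ᵀ)) := by simp only [Matrix.mul_assoc]
      _ = Nz * (P₂ᵀ*Q₂ᵀ) := by rw [hQ₂P₂, Matrix.one_mul]
      _ = Nz := by rw [← Matrix.transpose_mul, hQ₂P₂, Matrix.transpose_one, Matrix.mul_one]
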